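/- Let H be a Hilbert space, g : [a,b] → H of bounded variation, and h : [a,b] → ℝ continuous, so that the Henstock–Kurzweil–Stieltjes integral I = HK∫_a^b h(s) dg(s) exists. Suppose in addition that A is a closed, densely defined linear operator on H, that g(s) lies in the domain of A for every s ∈ [a,b], and that the function f(s) = A g(s) is of bounded variation. Then I lies in the domain of A and A I = HK∫_a^b h(s) df(s). -/

import Mathlib

/-- A tagged partition of the compact interval `[a, b]`:
points `a = t 0 ≤ t 1 ≤ … ≤ t n = b` together with tags `tag i ∈ [t i, t (i+1)]`. -/
structure TaggedPartition (a b : ℝ) where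
  n : ℕ
  t : ℕ → ℝ
  tag : ℕ → ℝ
  first : t 0 = a
  last : t n = b
  mono : ∀ i < n, t i ≤ t (i + 1)
  tag_mem : ∀ i < n, tag i ∈ Set.Icc (t i) (t (i + 1))

/-- A tagged partition is `δ`-fine if each subinterval `[t i, t (i+1)]` is contained in
`(tag i - δ (tag i), tag i + δ (tag i))`. -/
def TaggedPartition.IsFine {a b : ℝ} (δ : ℝ → ℝ) (P : TaggedPartition a b) : Prop :=
  ∀ i < P.n, Set.Icc (P.t i) (P.t (i + 1)) ⊆
    Set.Ioo (P.tag i - δ (P.tag i)) (P.tag i + δ (P.tag i))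

/-- The Riemann sum `Σ_i f(τ_i) (t_{i+1} - t_i)` associated with a tagged partition. -/
noncomputable def TaggedPartition.riemannSum {a b : ℝ} {X : Type*}
    [AddCommGroup X] [Module ℝ X] (P : TaggedPartition a b) (f : ℝ → X) : X :=
  ∑ i ∈ Finset.range P.n, (P.t (i + 1) - P.t i) • f (P.tag i)

/-- `f` is Henstock–Kurzweil integrable on `[a, b]` with integral `I`. -/
def HasHKIntegral {X : Type*} [NormedAddCommGroup X] [NormedSpace ℝ X]
    (a b : ℝ) (f : ℝ → X) (I : X) : Prop :=
  ∀ ε > 0, ∃ δ : ℝ → ℝ, (∀ x ∈ Set.Icc a b, 0 < δ x) ∧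
    ∀ P : TaggedPartition a b, P.IsFine δ → ‖P.riemannSum f - I‖ < ε

/-- `g : [a,b] → H` is of bounded variation: the sums `Σ ‖g (x_{i+1}) - g (x_i)‖` over
all finite partitions `a = x_0 ≤ x_1 ≤ … ≤ x_n = b` are uniformly bounded. -/
def BVOn {H : Type*} [NormedAddCommGroup H] (g : ℝ → H) (a b : ℝ) : Prop :=
  ∃ M : ℝ, ∀ (n : ℕ) (x : ℕ → ℝ), x 0 = a → x n = b → (∀ i < n, x i ≤ x (i + 1)) →
    ∑ i ∈ Finset.range n, ‖g (x (i + 1)) - g (x i)‖ ≤ M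

/-- The Riemann–Stieltjes sum `Σ_i h(τ_i) (g (t_{i+1}) - g (t_i))`. -/
noncomputable def TaggedPartition.stieltjesSum {a b : ℝ} {H : Type*}
    [AddCommGroup H] [Module ℝ H] (P : TaggedPartition a b) (h : ℝ → ℝ) (g : ℝ → H) : H :=
  ∑ i ∈ Finset.range P.n, h (P.tag i) • (g (P.t (i + 1)) - g (P.t i))

/-- `HK∫_a^b h dg = I` in the Henstock–Kurzweil–Stieltjes sense. -/
def HasHKStieltjesIntegral {H : Type*} [NormedAddCommGroup H] [NormedSpace ℝ H]
    (a b : ℝ) (h : ℝ → ℝ) (g : ℝ → H) (I : H) : Prop :=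
  ∀ ε > 0, ∃ δ : ℝ → ℝ, (∀ x ∈ Set.Icc a b, 0 < δ x) ∧
    ∀ P : TaggedPartition a b, P.IsFine δ → ‖P.stieltjesSum h g - I‖ < ε



open Finset

lemma chain_mono' {α : Type*} [Preorder α] {u : ℕ → α} {n : ℕ}
    (h : ∀ i < n, u i ≤ u (i + 1)) :
    ∀ i j, i ≤ j → j ≤ n → u i ≤ u j := by
  intro i j hij hjn
  induction j with
  | zero => exact Nat.le_zero.mp hij ▸ le_refl _
  | succ k ih =>
    rcases Nat.eq_or_lt_of_le hij with rfl | hlt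
    · exact le_refl _
    · exact le_trans (ih (Nat.lt_succ_iff.mp hlt) (by omega)) (h k (by omega))

lemma sum_blocks {X : Type*} [AddCommMonoid X] (F : ℕ → X) (ρ : ℕ → ℕ) :
    ∀ n : ℕ, (∀ i < n, ρ i ≤ ρ (i + 1)) →
      ∑ i ∈ range n, ∑ j ∈ Ico (ρ i) (ρ (i + 1)), F j = ∑ j ∈ Ico (ρ 0) (ρ n), F j := by
  intro n
  induction n with
  | zero => simp
  | succ k ih =>
    intro hmono
    rw [sum_range_succ, ih (fun i hi => hmono i (by omega)),
      Finset.sum_Ico_consecutive _ (chain_mono' hmono 0 k (by omega) (by omega))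
        (hmono k (by omega))]

lemma telescope_Ico {X : Type*} [AddCommGroup X] (F : ℕ → X) {p q : ℕ} (hpq : p ≤ q) :
    ∑ j ∈ Ico p q, (F (j + 1) - F j) = F q - F p := by
  rw [Finset.sum_Ico_eq_sub _ hpq, Finset.sum_range_sub, Finset.sum_range_sub]
  abel

namespace TaggedPartition

open Finset

lemma t_le_t {a b : ℝ} (P : TaggedPartition a b) {i j : ℕ} (hij : i ≤ j) (hj : j ≤ P.n) :
    P.t i ≤ P.t j := chain_mono' P.mono i j hij hj

lemma t_mem {a b : ℝ} (P : TaggedPartition a b) {i : ℕ} (hi : i ≤ P.n) :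
    P.t i ∈ Set.Icc a b := by
  exact ⟨P.first.symm.trans_le (P.t_le_t (Nat.zero_le i) hi),
    (P.t_le_t hi le_rfl).trans_eq P.last⟩

lemma tag_mem_Icc {a b : ℝ} (P : TaggedPartition a b) {i : ℕ} (hi : i < P.n) :
    P.tag i ∈ Set.Icc a b := by
  obtain ⟨h1, h2⟩ := P.tag_mem i hi
  exact ⟨le_trans (P.t_mem (Nat.le_of_lt hi)).1 h1,
    le_trans h2 (P.t_mem hi).2⟩

end TaggedPartition

open Finset in
lemma compare_refine {H : Type*} [NormedAddCommGroup H] [NormedSpace ℝ H]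
    {a b : ℝ} (P : TaggedPartition a b) (h : ℝ → ℝ) (f : ℝ → H)
    {δ ε' : ℝ} (hfine : P.IsFine (fun _ => δ))
    (hmod : ∀ x ∈ Set.Icc a b, ∀ y ∈ Set.Icc a b, |x - y| < δ → |h x - h y| ≤ ε')
    {m : ℕ} {r : ℕ → ℝ} {ρ : ℕ → ℕ}
    (hrρ : ∀ i ≤ P.n, r (ρ i) = P.t i)
    (hρ0 : ρ 0 = 0) (hρn : ρ P.n = m)
    (hρmono : ∀ i < P.n, ρ i ≤ ρ (i + 1))
    (hrmono : ∀ j < m, r j ≤ r (j + 1)) :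
    ‖P.stieltjesSum h f - ∑ j ∈ range m, h (r j) • (f (r (j + 1)) - f (r j))‖
      ≤ ε' * ∑ j ∈ range m, ‖f (r (j + 1)) - f (r j)‖ := by
  have hρle : ∀ i ≤ P.n, ρ i ≤ m := fun i hi => hρn ▸ chain_mono' hρmono i P.n hi le_rfl
  have key1 : P.stieltjesSum h f
      = ∑ i ∈ range P.n, ∑ j ∈ Ico (ρ i) (ρ (i + 1)),
          h (P.tag i) • (f (r (j + 1)) - f (r j)) := by
    unfold TaggedPartition.stieltjesSum
    refine Finset.sum_congr rfl fun i hi => ?_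
    rw [mem_range] at hi
    rw [← Finset.smul_sum, telescope_Ico (fun j => f (r j)) (hρmono i hi),
      hrρ i (Nat.le_of_lt hi), hrρ (i + 1) hi]
  have key2 : ∑ j ∈ range m, h (r j) • (f (r (j + 1)) - f (r j))
      = ∑ i ∈ range P.n, ∑ j ∈ Ico (ρ i) (ρ (i + 1)),
          h (r j) • (f (r (j + 1)) - f (r j)) := by
    rw [sum_blocks _ ρ P.n hρmono, hρ0, hρn, Finset.range_eq_Ico]
  rw [key1, key2, ← Finset.sum_sub_distrib]
  have step : ∀ i ∈ range P.n,
      ‖∑ j ∈ Ico (ρ i) (ρ (i + 1)), h (P.tag i) • (f (r (j + 1)) - f (r j))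
        - ∑ j ∈ Ico (ρ i) (ρ (i + 1)), h (r j) • (f (r (j + 1)) - f (r j))‖
      ≤ ∑ j ∈ Ico (ρ i) (ρ (i + 1)), ε' * ‖f (r (j + 1)) - f (r j)‖ := by
    intro i hi
    rw [mem_range] at hi
    rw [← Finset.sum_sub_distrib]
    refine le_trans (norm_sum_le _ _) (Finset.sum_le_sum fun j hj => ?_)
    rw [Finset.mem_Ico] at hj
    rw [← sub_smul, norm_smul, Real.norm_eq_abs]
    refine mul_le_mul_of_nonneg_right ?_ (norm_nonneg _)
    -- r j ∈ [t i, t (i+1)]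
    have hjm : j ≤ m := le_trans (Nat.le_of_lt hj.2) (hρle (i + 1) hi)
    have hlo : P.t i ≤ r j := by
      rw [← hrρ i (Nat.le_of_lt hi)]
      exact chain_mono' hrmono (ρ i) j hj.1 hjm
    have hhi : r j ≤ P.t (i + 1) := by
      rw [← hrρ (i + 1) hi]
      exact chain_mono' hrmono j (ρ (i + 1)) (Nat.le_of_lt hj.2) (hρle (i + 1) hi)
    have hrj_ab : r j ∈ Set.Icc a b :=
      ⟨le_trans (P.t_mem (Nat.le_of_lt hi)).1 hlo, le_trans hhi (P.t_mem hi).2⟩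
    have hIoo := hfine i hi ⟨hlo, hhi⟩
    obtain ⟨hI1, hI2⟩ := hIoo
    exact hmod _ (P.tag_mem_Icc hi) _ hrj_ab (abs_sub_lt_iff.mpr ⟨by linarith, by linarith⟩)
  refine le_trans (norm_sum_le _ _) (le_trans (Finset.sum_le_sum step) ?_)
  rw [sum_blocks (fun j => ε' * ‖f (r (j + 1)) - f (r j)‖) ρ P.n hρmono, hρ0, hρn,
    ← Finset.range_eq_Ico, ← Finset.mul_sum]

open Finset in
lemma exists_common_refinement {a b : ℝ} (P Q : TaggedPartition a b) :
    ∃ (m : ℕ) (r : ℕ → ℝ) (ρP ρQ : ℕ → ℕ),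
      (∀ i ≤ P.n, r (ρP i) = P.t i) ∧ ρP 0 = 0 ∧ ρP P.n = m ∧
        (∀ i < P.n, ρP i ≤ ρP (i + 1)) ∧
      (∀ i ≤ Q.n, r (ρQ i) = Q.t i) ∧ ρQ 0 = 0 ∧ ρQ Q.n = m ∧
        (∀ i < Q.n, ρQ i ≤ ρQ (i + 1)) ∧
      (∀ j < m, r j ≤ r (j + 1)) ∧ r 0 = a ∧ r m = b := by
  classical
  set S : Finset ℝ := (range (P.n + 1)).image P.t ∪ (range (Q.n + 1)).image Q.t with hS
  have hmemP : ∀ i ≤ P.n, P.t i ∈ S := by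
    intro i hi
    exact Finset.mem_union_left _ (Finset.mem_image.mpr ⟨i, Finset.mem_range.mpr (by omega), rfl⟩)
  have hmemQ : ∀ i ≤ Q.n, Q.t i ∈ S := by
    intro i hi
    exact Finset.mem_union_right _ (Finset.mem_image.mpr ⟨i, Finset.mem_range.mpr (by omega), rfl⟩)
  have hlo : ∀ x ∈ S, a ≤ x := by
    intro x hx
    rcases Finset.mem_union.mp hx with hx | hx <;>
    · obtain ⟨i, hi, rfl⟩ := Finset.mem_image.mp hx
      rw [Finset.mem_range] at hi
      first
      | exact (P.t_mem (by omega)).1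
      | exact (Q.t_mem (by omega)).1
  have hhi : ∀ x ∈ S, x ≤ b := by
    intro x hx
    rcases Finset.mem_union.mp hx with hx | hx <;>
    · obtain ⟨i, hi, rfl⟩ := Finset.mem_image.mp hx
      rw [Finset.mem_range] at hi
      first
      | exact (P.t_mem (by omega)).2
      | exact (Q.t_mem (by omega)).2
  have hcard : 1 ≤ S.card :=
    Finset.card_pos.mpr ⟨P.t 0, hmemP 0 (Nat.zero_le _)⟩
  set m := S.card - 1 with hm
  have hcard' : S.card = m + 1 := by omega
  set e := S.orderIsoOfFin hcard' with he
  set r : ℕ → ℝ := fun j => (e ⟨min j m, by omega⟩ : ℝ) with hr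
  have r_idx : ∀ (x : S), r ((e.symm x) : Fin (m + 1)).val = x := by
    intro x
    have h1 : min ((e.symm x) : Fin (m + 1)).val m = ((e.symm x) : Fin (m + 1)).val :=
      min_eq_left (by omega)
    simp only [hr]
    rw [show (⟨min ((e.symm x) : Fin (m+1)).val m, by omega⟩ : Fin (m+1)) = e.symm x from
      Fin.ext h1]
    rw [OrderIso.apply_symm_apply]
  set ρP : ℕ → ℕ := fun i => ((e.symm ⟨P.t (min i P.n), hmemP _ (min_le_right _ _)⟩ :
    Fin (m + 1))).val with hρP
  set ρQ : ℕ → ℕ := fun i => ((e.symm ⟨Q.t (min i Q.n), hmemQ _ (min_le_right _ _)⟩ :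
    Fin (m + 1))).val with hρQ
  -- generic facts
  have symm_min : ∀ (x : S), (∀ y ∈ S, (x : ℝ) ≤ y) → ((e.symm x : Fin (m+1))).val = 0 := by
    intro x hx
    have h1 : (e (e.symm x) : ℝ) ≤ (e 0 : ℝ) := by
      rw [OrderIso.apply_symm_apply]
      exact hx _ (e 0).2
    have h2 : e.symm x ≤ 0 := e.le_iff_le.mp (Subtype.coe_le_coe.mp h1)
    have h3 := Fin.le_def.mp h2
    simp only [Fin.val_zero] at h3
    omega
  have symm_max : ∀ (x : S), (∀ y ∈ S, y ≤ (x : ℝ)) → ((e.symm x : Fin (m+1))).val = m := by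
    intro x hx
    have h1 : (e ⟨m, by omega⟩ : ℝ) ≤ (e (e.symm x) : ℝ) := by
      rw [OrderIso.apply_symm_apply]
      exact hx _ (e ⟨m, by omega⟩).2
    have h2 : (⟨m, by omega⟩ : Fin (m + 1)) ≤ e.symm x := e.le_iff_le.mp (Subtype.coe_le_coe.mp h1)
    have h3 := Fin.le_def.mp h2
    have h4 : ((e.symm x : Fin (m+1))).val < m + 1 := (e.symm x).isLt
    have h5 : ((⟨m, by omega⟩ : Fin (m+1))).val = m := rfl
    omega
  have key : ∀ (R : TaggedPartition a b) (hmemR : ∀ i ≤ R.n, R.t i ∈ S),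
      (∀ i ≤ R.n, r (((e.symm ⟨R.t (min i R.n), hmemR _ (min_le_right _ _)⟩ :
          Fin (m + 1))).val) = R.t i) ∧
      ((e.symm ⟨R.t (min 0 R.n), hmemR _ (min_le_right _ _)⟩ : Fin (m + 1))).val = 0 ∧
      ((e.symm ⟨R.t (min R.n R.n), hmemR _ (min_le_right _ _)⟩ : Fin (m + 1))).val = m ∧
      (∀ i < R.n, ((e.symm ⟨R.t (min i R.n), hmemR _ (min_le_right _ _)⟩ : Fin (m + 1))).val ≤
        ((e.symm ⟨R.t (min (i+1) R.n), hmemR _ (min_le_right _ _)⟩ : Fin (m + 1))).val) := by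
    intro R hmemR
    refine ⟨?_, ?_, ?_, ?_⟩
    · intro i hi
      have := r_idx ⟨R.t (min i R.n), hmemR _ (min_le_right _ _)⟩
      rw [this]
      exact congrArg R.t (min_eq_left hi)
    · apply symm_min
      intro y hy
      show R.t (min 0 R.n) ≤ y
      rw [min_eq_left (Nat.zero_le _), R.first]
      exact hlo y hy
    · apply symm_max
      intro y hy
      show y ≤ R.t (min R.n R.n)
      rw [min_self, R.last]
      exact hhi y hy
    · intro i hi
      have hle : (⟨R.t (min i R.n), hmemR _ (min_le_right _ _)⟩ : S) ≤
          ⟨R.t (min (i+1) R.n), hmemR _ (min_le_right _ _)⟩ := by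
        apply Subtype.mk_le_mk.mpr
        rw [min_eq_left (by omega), min_eq_left hi]
        exact R.mono i hi
      exact Fin.le_def.mp (e.symm.le_iff_le.mpr hle)
  obtain ⟨kP1, kP2, kP3, kP4⟩ := key P hmemP
  obtain ⟨kQ1, kQ2, kQ3, kQ4⟩ := key Q hmemQ
  have hrmono : ∀ j < m, r j ≤ r (j + 1) := by
    intro j hj
    apply Subtype.coe_le_coe.mpr
    apply e.le_iff_le.mpr
    exact Fin.mk_le_mk.mpr (min_le_min (Nat.le_succ j) le_rfl)
  have hr0 : r 0 = a := by
    have := kP1 0 (Nat.zero_le _)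
    rw [kP2] at this
    rw [this, P.first]
  have hrm : r m = b := by
    have := kP1 P.n le_rfl
    rw [kP3] at this
    rw [this, P.last]
  exact ⟨m, r, ρP, ρQ, kP1, kP2, kP3, kP4,
    kQ1, kQ2, kQ3, kQ4, hrmono, hr0, hrm⟩

open Finset in
lemma stieltjes_sum_close {H : Type*} [NormedAddCommGroup H] [NormedSpace ℝ H]
    {a b : ℝ} (h : ℝ → ℝ) (f : ℝ → H) {M δ ε' : ℝ} (hε' : 0 ≤ ε')
    (hM : ∀ (n : ℕ) (x : ℕ → ℝ), x 0 = a → x n = b → (∀ i < n, x i ≤ x (i + 1)) →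
      ∑ i ∈ range n, ‖f (x (i + 1)) - f (x i)‖ ≤ M)
    (hmod : ∀ x ∈ Set.Icc a b, ∀ y ∈ Set.Icc a b, |x - y| < δ → |h x - h y| ≤ ε')
    (P Q : TaggedPartition a b) (hP : P.IsFine fun _ => δ) (hQ : Q.IsFine fun _ => δ) :
    ‖P.stieltjesSum h f - Q.stieltjesSum h f‖ ≤ 2 * (ε' * M) := by
  obtain ⟨m, r, ρP, ρQ, h1, h2, h3, h4, h5, h6, h7, h8, h9, h10, h11⟩ :=
    exists_common_refinement P Q
  have hsum : ∑ j ∈ range m, ‖f (r (j + 1)) - f (r j)‖ ≤ M := hM m r h10 h11 h9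
  have e1 := compare_refine P h f hP hmod h1 h2 h3 h4 h9
  have e2 := compare_refine Q h f hQ hmod h5 h6 h7 h8 h9
  set T := ∑ j ∈ range m, h (r j) • (f (r (j + 1)) - f (r j))
  calc ‖P.stieltjesSum h f - Q.stieltjesSum h f‖
      ≤ ‖P.stieltjesSum h f - T‖ + ‖T - Q.stieltjesSum h f‖ := norm_sub_le_norm_sub_add_norm_sub _ _ _
    _ ≤ ε' * M + ε' * M := by
        rw [norm_sub_rev T]
        exact add_le_add (le_trans e1 (mul_le_mul_of_nonneg_left hsum hε'))
          (le_trans e2 (mul_le_mul_of_nonneg_left hsum hε'))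
    _ = 2 * (ε' * M) := by ring

/-- The uniform partition of `[a,b]` into `n+1` pieces, tagged by left endpoints. -/
noncomputable def unifP (a b : ℝ) (hab : a ≤ b) (n : ℕ) : TaggedPartition a b where
  n := n + 1
  t := fun i => a + (min i (n + 1) : ℕ) * (b - a) / (n + 1)
  tag := fun i => a + (min i (n + 1) : ℕ) * (b - a) / (n + 1)
  first := by simp
  last := by
    show a + ((min (n+1) (n+1) : ℕ) : ℝ) * (b - a) / (n + 1) = b
    rw [min_self]
    field_simp
    push_cast
    ring
  mono := by
    intro i hi
    show a + ((min i (n+1) : ℕ) : ℝ) * (b - a) / (n + 1)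
        ≤ a + ((min (i+1) (n+1) : ℕ) : ℝ) * (b - a) / (n + 1)
    rw [min_eq_left (by omega), min_eq_left (by omega)]
    have : (i : ℝ) ≤ (i + 1 : ℕ) := by push_cast; linarith
    have hba : (0:ℝ) ≤ b - a := by linarith
    have hn : (0:ℝ) < (n + 1 : ℕ) := by positivity
    gcongr
  tag_mem := by
    intro i hi
    constructor
    · exact le_refl _
    · show a + ((min i (n+1) : ℕ) : ℝ) * (b - a) / (n + 1)
          ≤ a + ((min (i+1) (n+1) : ℕ) : ℝ) * (b - a) / (n + 1)
      rw [min_eq_left (by omega), min_eq_left (by omega)]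
      have : (i : ℝ) ≤ (i + 1 : ℕ) := by push_cast; linarith
      have hba : (0:ℝ) ≤ b - a := by linarith
      have hn : (0:ℝ) < (n + 1 : ℕ) := by positivity
      gcongr

lemma unifP_fine {a b : ℝ} (hab : a ≤ b) (n : ℕ) {δ : ℝ} (hδ : 0 < δ)
    (hmesh : (b - a) / (n + 1) < δ) : (unifP a b hab n).IsFine fun _ => δ := by
  intro i hi x hx
  obtain ⟨hx1, hx2⟩ := hx
  simp only [unifP] at hx1 hx2 hi ⊢
  rw [min_eq_left (by omega)] at hx1 ⊢
  rw [min_eq_left (by omega)] at hx2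
  have hstep : ((i + 1 : ℕ) : ℝ) * (b - a) / (n + 1) = (i : ℝ) * (b - a) / (n+1) + (b - a) / (n+1) := by
    push_cast
    ring
  constructor
  · linarith
  · rw [hstep] at hx2
    linarith

open Finset in
lemma exists_hkStieltjes {H : Type*} [NormedAddCommGroup H] [NormedSpace ℝ H]
    [CompleteSpace H] {a b : ℝ} (hab : a ≤ b) (h : ℝ → ℝ) (f : ℝ → H)
    (hh : ContinuousOn h (Set.Icc a b)) (hfBV : BVOn f a b) :
    ∃ J : H, HasHKStieltjesIntegral a b h f J := by
  obtain ⟨M₀, hM₀⟩ := hfBV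
  set M := max M₀ 0 with hMdef
  have hM : ∀ (n : ℕ) (x : ℕ → ℝ), x 0 = a → x n = b → (∀ i < n, x i ≤ x (i + 1)) →
      ∑ i ∈ range n, ‖f (x (i + 1)) - f (x i)‖ ≤ M :=
    fun n x h1 h2 h3 => le_trans (hM₀ n x h1 h2 h3) (le_max_left _ _)
  have hM0 : 0 ≤ M := le_max_right _ _
  have huc : UniformContinuousOn h (Set.Icc a b) :=
    isCompact_Icc.uniformContinuousOn_of_continuous hh
  have hmod : ∀ ε > 0, ∃ δ > 0, ∀ x ∈ Set.Icc a b, ∀ y ∈ Set.Icc a b,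
      |x - y| < δ → |h x - h y| ≤ ε := by
    intro ε hε
    obtain ⟨δ, hδ, hδ'⟩ := Metric.uniformContinuousOn_iff.mp huc ε hε
    exact ⟨δ, hδ, fun x hx y hy hxy =>
      le_of_lt (by simpa [Real.dist_eq] using hδ' x hx y hy (by simpa [Real.dist_eq] using hxy))⟩
  set u : ℕ → H := fun k => (unifP a b hab k).stieltjesSum h f with hu
  -- mesh of unifP k is small for large k
  have hmesh : ∀ {δ : ℝ}, 0 < δ → ∃ N : ℕ, ∀ n ≥ N, (b - a) / (n + 1) < δ := by
    intro δ hδ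
    obtain ⟨N, hN⟩ := exists_nat_gt ((b - a) / δ)
    refine ⟨N, fun n hn => ?_⟩
    rw [div_lt_iff₀ (by positivity)]
    have h1 : (b - a) / δ < N := hN
    have h2 : (N : ℝ) ≤ n := by exact_mod_cast hn
    have : (b - a) / δ < n + 1 := by linarith
    calc b - a = (b - a) / δ * δ := by field_simp
      _ < (n + 1) * δ := by
          apply mul_lt_mul_of_pos_right this hδ
      _ = δ * (n + 1) := by ring
  have hcauchy : CauchySeq u := by
    rw [Metric.cauchySeq_iff']
    intro ε hε
    set ε' := ε / (2 * (M + 1)) with hε'def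
    have hε' : 0 < ε' := by positivity
    obtain ⟨δ, hδ, hδmod⟩ := hmod ε' hε'
    obtain ⟨N, hN⟩ := hmesh hδ
    refine ⟨N, fun n hn => ?_⟩
    have h1 : dist (u n) (u N) ≤ 2 * (ε' * M) := by
      rw [dist_eq_norm]
      exact stieltjes_sum_close h f (le_of_lt hε') hM hδmod _ _
        (unifP_fine hab n hδ (hN n hn)) (unifP_fine hab N hδ (hN N le_rfl))
    have hM1 : (0:ℝ) < M + 1 := by linarith
    have h2 : 2 * (ε' * M) < ε := by
      have key : 2 * (ε' * M) = ε * (M / (M + 1)) := by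
        rw [hε'def]; field_simp
      rw [key]
      calc ε * (M / (M + 1)) < ε * 1 :=
            mul_lt_mul_of_pos_left ((div_lt_one hM1).mpr (by linarith)) hε
        _ = ε := mul_one ε
    exact lt_of_le_of_lt h1 h2
  obtain ⟨J, hJ⟩ := cauchySeq_tendsto_of_complete hcauchy
  refine ⟨J, ?_⟩
  intro ε hε
  set ε' := ε / (4 * (M + 1)) with hε'def
  have hM1 : (0:ℝ) < M + 1 := by linarith
  have hε' : 0 < ε' := by positivity
  obtain ⟨δ, hδ, hδmod⟩ := hmod ε' hε'
  refine ⟨fun _ => δ, fun x _ => hδ, ?_⟩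
  intro P hP
  obtain ⟨N1, hN1⟩ := hmesh hδ
  obtain ⟨N2, hN2⟩ := Metric.tendsto_atTop.mp hJ (ε / 2) (by positivity)
  set n := max N1 N2 with hn
  have hfine := unifP_fine hab n hδ (hN1 n (le_max_left _ _))
  have hclose : dist (u n) J < ε / 2 := hN2 n (le_max_right _ _)
  have h1 : ‖P.stieltjesSum h f - u n‖ ≤ 2 * (ε' * M) :=
    stieltjes_sum_close h f (le_of_lt hε') hM hδmod P (unifP a b hab n) hP hfine
  have h2 : 2 * (ε' * M) ≤ ε / 2 := by
    have key : 2 * (ε' * M) = ε / 2 * (M / (M + 1)) := by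
      rw [hε'def]; field_simp; ring
    rw [key]
    calc ε / 2 * (M / (M + 1)) ≤ ε / 2 * 1 :=
          mul_le_mul_of_nonneg_left ((div_le_one hM1).mpr (by linarith)) (by positivity)
      _ = ε / 2 := mul_one _
  have h3 := norm_sub_le_norm_sub_add_norm_sub (P.stieltjesSum h f) (u n) J
  rw [dist_eq_norm] at hclose
  linarith

/-- Extend a tagged partition of `[a, x]` by one subinterval `[x, y]` with tag `τ`. -/
def TaggedPartition.extend {a x : ℝ} (P : TaggedPartition a x) (y τ : ℝ)
    (hxy : x ≤ y) (hτ : τ ∈ Set.Icc x y) : TaggedPartition a y where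
  n := P.n + 1
  t := fun i => if i ≤ P.n then P.t i else y
  tag := fun i => if i < P.n then P.tag i else τ
  first := by simp [P.first]
  last := by simp
  mono := by
    intro i hi
    rcases Nat.lt_or_ge i P.n with hlt | hge
    · rw [if_pos (show i ≤ P.n by omega), if_pos (show i + 1 ≤ P.n by omega)]
      exact P.mono i hlt
    · have hieq : i = P.n := by omega
      subst hieq
      rw [if_pos le_rfl, if_neg (show ¬ P.n + 1 ≤ P.n by omega), P.last]
      exact hxy
  tag_mem := by
    intro i hi
    rcases Nat.lt_or_ge i P.n with hlt | hge
    · rw [if_pos hlt, if_pos (show i ≤ P.n by omega), if_pos (show i + 1 ≤ P.n by omega)]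
      exact P.tag_mem i hlt
    · have hieq : i = P.n := by omega
      subst hieq
      rw [if_neg (show ¬ P.n < P.n by omega), if_pos le_rfl, if_neg (show ¬ P.n + 1 ≤ P.n by omega), P.last]
      exact hτ

lemma TaggedPartition.extend_fine {a x : ℝ} (P : TaggedPartition a x) (y τ : ℝ)
    (hxy : x ≤ y) (hτ : τ ∈ Set.Icc x y) (δ : ℝ → ℝ) (hP : P.IsFine δ)
    (hsub : Set.Icc x y ⊆ Set.Ioo (τ - δ τ) (τ + δ τ)) :
    (P.extend y τ hxy hτ).IsFine δ := by
  intro i hi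
  simp only [TaggedPartition.extend] at hi ⊢
  rcases Nat.lt_or_ge i P.n with hlt | hge
  · rw [if_pos hlt, if_pos (show i ≤ P.n by omega), if_pos (show i + 1 ≤ P.n by omega)]
    exact hP i hlt
  · have hieq : i = P.n := by omega
    subst hieq
    rw [if_neg (show ¬ P.n < P.n by omega), if_pos le_rfl, if_neg (show ¬ P.n + 1 ≤ P.n by omega), P.last]
    exact hsub

/-- The trivial partition of `[a, a]`. -/
def TaggedPartition.trivial (a : ℝ) : TaggedPartition a a where
  n := 0
  t := fun _ => a
  tag := fun _ => a
  first := rfl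
  last := rfl
  mono := by omega
  tag_mem := by omega

/-- **Cousin's lemma**: every positive gauge on `[a, b]` admits a fine tagged partition. -/
lemma cousin {a b : ℝ} (hab : a ≤ b) (δ : ℝ → ℝ) (hδ : ∀ x ∈ Set.Icc a b, 0 < δ x) :
    ∃ P : TaggedPartition a b, P.IsFine δ := by
  set s : Set ℝ := {x | x ∈ Set.Icc a b ∧ ∃ P : TaggedPartition a x, P.IsFine δ} with hs
  have has : a ∈ s := ⟨⟨le_rfl, hab⟩, TaggedPartition.trivial a, by intro i hi; exact absurd hi (by simp [TaggedPartition.trivial])⟩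
  have hbdd : BddAbove s := ⟨b, fun x hx => hx.1.2⟩
  have hne : s.Nonempty := ⟨a, has⟩
  set c := sSup s with hc
  have hac : a ≤ c := le_csSup hbdd has
  have hcb : c ≤ b := csSup_le hne (fun x hx => hx.1.2)
  have hcab : c ∈ Set.Icc a b := ⟨hac, hcb⟩
  have hδc : 0 < δ c := hδ c hcab
  -- c ∈ s
  have hcs : ∃ P : TaggedPartition a c, P.IsFine δ := by
    obtain ⟨x, hxs, hxgt⟩ := exists_lt_of_lt_csSup hne (show c - δ c < c by linarith)
    have hxc : x ≤ c := le_csSup hbdd hxs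
    obtain ⟨P, hP⟩ := hxs.2
    refine ⟨P.extend c c hxc ⟨hxc, le_rfl⟩, P.extend_fine c c hxc _ δ hP ?_⟩
    intro z hz
    obtain ⟨h1, h2⟩ := hz
    exact ⟨by linarith, by linarith⟩
  obtain ⟨Pc, hPc⟩ := hcs
  rcases eq_or_lt_of_le hcb with heq | hlt
  · exact heq ▸ ⟨Pc, hPc⟩
  · exfalso
    set y := min b (c + δ c / 2) with hy
    have hcy : c ≤ y := le_min (le_of_lt hlt) (by linarith)
    have hyc : c < y := lt_min hlt (by linarith)
    have hys : y ∈ s := by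
      refine ⟨⟨le_trans hac hcy, min_le_left _ _⟩, Pc.extend y c hcy ⟨le_rfl, hcy⟩,
        Pc.extend_fine y c hcy _ δ hPc ?_⟩
      intro z hz
      obtain ⟨h1, h2⟩ := hz
      have : y ≤ c + δ c / 2 := min_le_right _ _
      exact ⟨by linarith, by linarith⟩
    have : y ≤ c := le_csSup hbdd hys
    linarith

/-- with `g` of bounded variation, `h` continuous and
`I = HK∫_a^b h dg`, if `A` is a closed densely defined linear operator on `H`,
`g(s) ∈ D(A)` for all `s ∈ [a,b]`, and `f = A ∘ g` is of bounded variation, then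
`I ∈ D(A)` and `A I = HK∫_a^b h df`. -/
theorem hk_stieltjes_integral_closed_operator
    {H : Type*} [NormedAddCommGroup H] [InnerProductSpace ℂ H] [CompleteSpace H]
    (a b : ℝ) (hab : a ≤ b) (g : ℝ → H) (h : ℝ → ℝ) (f : ℝ → H) (I : H)
    (hg : BVOn g a b) (hh : ContinuousOn h (Set.Icc a b))
    (hI : HasHKStieltjesIntegral a b h g I)
    (A : H →ₗ.[ℂ] H)
    (hclosed : IsClosed (A.graph : Set (H × H)))
    (hdense : Dense (A.domain : Set H))
    (hdom : ∀ s ∈ Set.Icc a b, g s ∈ A.domain)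
    (hf : ∀ s, ∀ hs : s ∈ Set.Icc a b, f s = A ⟨g s, hdom s hs⟩)
    (hfBV : BVOn f a b) :
    ∃ hI' : I ∈ A.domain, HasHKStieltjesIntegral a b h f (A ⟨I, hI'⟩) := by
  obtain ⟨J, hJ⟩ := exists_hkStieltjes hab h f hh hfBV
  have hpair : ∀ P : TaggedPartition a b,
      (P.stieltjesSum h g, P.stieltjesSum h f) ∈ A.graph := by
    intro P
    have hEq : (P.stieltjesSum h g, P.stieltjesSum h f)
        = ∑ i ∈ Finset.range P.n, h (P.tag i) •
            ((g (P.t (i + 1)), f (P.t (i + 1))) - (g (P.t i), f (P.t i))) := by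
      apply Prod.ext <;>
        simp [TaggedPartition.stieltjesSum, Prod.fst_sum, Prod.snd_sum]
    rw [hEq]
    apply Submodule.sum_mem
    intro i hi
    rw [Finset.mem_range] at hi
    rw [← algebraMap_smul (R := ℝ) ℂ (h (P.tag i))
      ((g (P.t (i + 1)), f (P.t (i + 1))) - (g (P.t i), f (P.t i)))]
    apply Submodule.smul_mem
    apply Submodule.sub_mem
    · have hm := P.t_mem (show i + 1 ≤ P.n by omega)
      rw [hf _ hm]
      exact A.mem_graph ⟨g (P.t (i + 1)), hdom _ hm⟩
    · have hm := P.t_mem (show i ≤ P.n from Nat.le_of_lt hi)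
      rw [hf _ hm]
      exact A.mem_graph ⟨g (P.t i), hdom _ hm⟩
  have hIJ : (I, J) ∈ A.graph := by
    have hmem : (I, J) ∈ closure (A.graph : Set (H × H)) := by
      rw [Metric.mem_closure_iff]
      intro ε hε
      obtain ⟨δ1, hδ1, hδ1'⟩ := hI ε hε
      obtain ⟨δ2, hδ2, hδ2'⟩ := hJ ε hε
      obtain ⟨P, hP⟩ := cousin hab (fun x => min (δ1 x) (δ2 x))
        (fun x hx => lt_min (hδ1 x hx) (hδ2 x hx))
      have hP1 : P.IsFine δ1 := by
        intro i hi z hz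
        obtain ⟨h1, h2⟩ := hP i hi hz
        have hle : min (δ1 (P.tag i)) (δ2 (P.tag i)) ≤ δ1 (P.tag i) := min_le_left _ _
        exact ⟨by linarith, by linarith⟩
      have hP2 : P.IsFine δ2 := by
        intro i hi z hz
        obtain ⟨h1, h2⟩ := hP i hi hz
        have hle : min (δ1 (P.tag i)) (δ2 (P.tag i)) ≤ δ2 (P.tag i) := min_le_right _ _
        exact ⟨by linarith, by linarith⟩
      refine ⟨(P.stieltjesSum h g, P.stieltjesSum h f), hpair P, ?_⟩
      rw [Prod.dist_eq]
      apply max_lt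
      · rw [dist_eq_norm, norm_sub_rev]
        exact hδ1' P hP1
      · rw [dist_eq_norm, norm_sub_rev]
        exact hδ2' P hP2
    rwa [hclosed.closure_eq] at hmem
  obtain ⟨y, hy1, hy2⟩ := A.mem_graph_iff.mp hIJ
  have hy1' : (y : H) = I := hy1
  have hy2' : A y = J := hy2
  refine ⟨hy1' ▸ y.2, ?_⟩
  have heq : (⟨I, hy1' ▸ y.2⟩ : A.domain) = y := Subtype.ext hy1'.symm
  have hAI : A ⟨I, hy1' ▸ y.2⟩ = J := by rw [heq]; exact hy2'
  rw [hAI]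
  exact hJ
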